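/- Let G be a finite simple graph on n ≥ 2 vertices, let d be a natural number with 2 ≤ d ≤ n, and let h = ⌈log_d n⌉. For each vertex v let deg(v) denote its degree in G and set p(v) = ⌈log_d(deg(v)+1)⌉. Then for every arrangement φ (injective map from the vertex set of G into {1,…,d^h}), OV(G,d,φ) ≥ Σ_{v ∈ V(G)} ( p(v)·(deg(v)+1) − (d^{p(v)} − 1)/(d−1) ), where each (d^{p(v)} − 1)/(d−1) is an exact integer division. -/

import Mathlib

/-- The canonical leaf distance on the complete `d`-regular tree of height `h`:
`δ_{d,h}(t,j) = 2·min{k ∈ {1,…,h} : ⌊(t−1)/d^k⌋ = ⌊(j−1)/d^k⌋}` for `t ≠ j`,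
and `δ_{d,h}(t,t) = 0`. -/
noncomputable def leafDist (d h t j : ℕ) : ℕ :=
  if t = j then 0
  else 2 * sInf {k : ℕ | 1 ≤ k ∧ k ≤ h ∧ (t - 1) / d ^ k = (j - 1) / d ^ k}

lemma leafDist_comm (d h t j : ℕ) : leafDist d h t j = leafDist d h j t := by
  unfold leafDist
  rcases eq_or_ne t j with h' | h'
  · simp [h']
  · rw [if_neg h', if_neg (Ne.symm h')]
    have hset : {k : ℕ | 1 ≤ k ∧ k ≤ h ∧ (t - 1) / d ^ k = (j - 1) / d ^ k}
        = {k : ℕ | 1 ≤ k ∧ k ≤ h ∧ (j - 1) / d ^ k = (t - 1) / d ^ k} := by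
      ext k
      exact and_congr_right fun _ => and_congr_right fun _ => eq_comm
    rw [hset]

/-- The objective value of an arrangement `φ` of the guest graph `G` on the leaves
of the complete `d`-regular tree of height `h`:
`OV(G,d,φ) = Σ_{{u,v} ∈ E(G)} δ_{d,h}(φ(u), φ(v))`. -/
noncomputable def OV {V : Type*} [Fintype V] [DecidableEq V] (G : SimpleGraph V)
    [DecidableRel G.Adj] (d h : ℕ) (φ : V → ℕ) : ℕ :=
  ∑ e ∈ G.edgeFinset,
    Sym2.lift ⟨fun u v => leafDist d h (φ u) (φ v),
      fun u v => leafDist_comm d h (φ u) (φ v)⟩ e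

/-! ### Auxiliary definitions and lemmas -/

/-- Half of the canonical leaf distance (for distinct leaves). -/
noncomputable def hdist (d h t j : ℕ) : ℕ :=
  sInf {k : ℕ | 1 ≤ k ∧ k ≤ h ∧ (t - 1) / d ^ k = (j - 1) / d ^ k}

lemma leafDist_eq_hdist {d h t j : ℕ} (hne : t ≠ j) :
    leafDist d h t j = 2 * hdist d h t j := by
  unfold leafDist hdist; rw [if_neg hne]

lemma hdist_comm (d h t j : ℕ) : hdist d h t j = hdist d h j t := by
  unfold hdist
  congr 1
  ext k
  exact and_congr_right fun _ => and_congr_right fun _ => eq_comm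

lemma hdist_spec {d h t j : ℕ} (hh : 1 ≤ h) (ht1 : 1 ≤ t) (ht : t ≤ d ^ h)
    (hj1 : 1 ≤ j) (hj : j ≤ d ^ h) :
    1 ≤ hdist d h t j ∧ hdist d h t j ≤ h ∧
      (t - 1) / d ^ hdist d h t j = (j - 1) / d ^ hdist d h t j := by
  have hne : {k : ℕ | 1 ≤ k ∧ k ≤ h ∧ (t - 1) / d ^ k = (j - 1) / d ^ k}.Nonempty :=
    ⟨h, hh, le_rfl, by
      rw [Nat.div_eq_of_lt (lt_of_lt_of_le (Nat.sub_lt ht1 one_pos) ht),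
          Nat.div_eq_of_lt (lt_of_lt_of_le (Nat.sub_lt hj1 one_pos) hj)]⟩
  exact Nat.sInf_mem hne

lemma div_eq_mono {d x y a b : ℕ} (hab : a ≤ b) (hxy : x / d ^ a = y / d ^ a) :
    x / d ^ b = y / d ^ b := by
  obtain ⟨c, rfl⟩ := Nat.exists_eq_add_of_le hab
  rw [pow_add, ← Nat.div_div_eq_div_mul, ← Nat.div_div_eq_div_mul, hxy]

/-- At most `d^k - 1` values distinct from `t` lie in the `d^k`-block of `t`. -/
lemma block_count {d k t : ℕ} (hd : 1 ≤ d) (ht1 : 1 ≤ t) (S : Finset ℕ)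
    (hS : ∀ j ∈ S, 1 ≤ j ∧ j ≠ t ∧ (j - 1) / d ^ k = (t - 1) / d ^ k) :
    S.card ≤ d ^ k - 1 := by
  have hdk : 0 < d ^ k := Nat.pow_pos hd
  have hmem : (t - 1) % d ^ k ∈ Finset.range (d ^ k) :=
    Finset.mem_range.2 (Nat.mod_lt _ hdk)
  have hcard : S.card ≤ ((Finset.range (d ^ k)).erase ((t - 1) % d ^ k)).card := by
    apply Finset.card_le_card_of_injOn (fun j => (j - 1) % d ^ k)
    · intro j hj
      obtain ⟨hj1, hjt, hdiv⟩ := hS j hj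
      refine Finset.mem_erase.2 ⟨?_, Finset.mem_range.2 (Nat.mod_lt _ hdk)⟩
      intro hmod
      apply hjt
      have hje : j - 1 = t - 1 := by
        conv_lhs => rw [← Nat.div_add_mod (j - 1) (d ^ k)]
        conv_rhs => rw [← Nat.div_add_mod (t - 1) (d ^ k)]
        rw [hdiv, show (j - 1) % d ^ k = (t - 1) % d ^ k from hmod]
      omega
    · intro a ha b hb hab
      have hab' : (a - 1) % d ^ k = (b - 1) % d ^ k := hab
      obtain ⟨ha1, -, hadiv⟩ := hS a ha
      obtain ⟨hb1, -, hbdiv⟩ := hS b hb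
      have hsimp : a - 1 = b - 1 := by
        conv_lhs => rw [← Nat.div_add_mod (a - 1) (d ^ k)]
        conv_rhs => rw [← Nat.div_add_mod (b - 1) (d ^ k)]
        rw [hadiv, hbdiv, hab']
      omega
  rwa [Finset.card_erase_of_mem hmem, Finset.card_range] at hcard

/-- Per-vertex lower bound on the sum of half-distances to neighbours. -/
lemma vertex_bound {V : Type*} [Fintype V] [DecidableEq V] (G : SimpleGraph V)
    [DecidableRel G.Adj] {d h : ℕ} (hd : 2 ≤ d) (hh1 : 1 ≤ h)
    (φ : V → ℕ) (hinj : Function.Injective φ)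
    (hrange : ∀ v, 1 ≤ φ v ∧ φ v ≤ d ^ h) (v : V) :
    Nat.clog d (G.degree v + 1) * (G.degree v + 1)
      - (d ^ Nat.clog d (G.degree v + 1) - 1) / (d - 1)
    ≤ ∑ u ∈ G.neighborFinset v, hdist d h (φ v) (φ u) := by
  set m := G.degree v with hm
  set p := Nat.clog d (m + 1) with hp
  set N := G.neighborFinset v with hN
  have hNcard : N.card = m := rfl
  set f : V → ℕ := fun u => hdist d h (φ v) (φ u) with hf
  -- Step A: few neighbours at small half-distance
  have stepA : ∀ k, (N.filter (fun u => f u ≤ k)).card ≤ d ^ k - 1 := by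
    intro k
    have himg : (N.filter (fun u => f u ≤ k)).card
        = ((N.filter (fun u => f u ≤ k)).image φ).card :=
      (Finset.card_image_of_injective _ hinj).symm
    rw [himg]
    apply block_count (t := φ v) (by omega) (hrange v).1
    intro j hj
    obtain ⟨u, hu, rfl⟩ := Finset.mem_image.1 hj
    obtain ⟨huN, hfu⟩ := Finset.mem_filter.1 hu
    have hadj : G.Adj v u := (SimpleGraph.mem_neighborFinset _ _ _).1 huN
    have hune : u ≠ v := fun e => G.irrefl (e ▸ hadj)
    have hφne : φ u ≠ φ v := fun e => hune (hinj e)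
    obtain ⟨_, _, hdiv⟩ := hdist_spec (d := d) hh1 (hrange v).1 (hrange v).2
      (hrange u).1 (hrange u).2
    exact ⟨(hrange u).1, hφne, (div_eq_mono hfu hdiv).symm⟩
  -- Step B
  have stepB : ∀ k, m + 1 - d ^ k ≤ (N.filter (fun u => k < f u)).card := by
    intro k
    have hsplit := Finset.card_filter_add_card_filter_not
      (s := N) (p := fun u => f u ≤ k)
    have hneg : (N.filter fun u => ¬ f u ≤ k) = N.filter (fun u => k < f u) := by
      simp only [not_le]
    rw [hneg, hNcard] at hsplit
    have hA := stepA k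
    have hdkpos : 0 < d ^ k := Nat.pow_pos (by omega)
    omega
  -- Step C: counting vs sum
  have stepC : ∑ k ∈ Finset.range p, (N.filter (fun u => k < f u)).card
      ≤ ∑ u ∈ N, f u := by
    calc ∑ k ∈ Finset.range p, (N.filter (fun u => k < f u)).card
        = ∑ k ∈ Finset.range p, ∑ u ∈ N, if k < f u then 1 else 0 := by
          refine Finset.sum_congr rfl fun k _ => ?_
          exact Finset.card_filter _ _
      _ = ∑ u ∈ N, ∑ k ∈ Finset.range p, if k < f u then 1 else 0 := Finset.sum_comm
      _ ≤ ∑ u ∈ N, f u := by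
          refine Finset.sum_le_sum fun u _ => ?_
          rw [← Finset.card_filter]
          calc ((Finset.range p).filter (fun k => k < f u)).card
              ≤ (Finset.range (f u)).card := by
                apply Finset.card_le_card
                intro k hk
                obtain ⟨-, hk2⟩ := Finset.mem_filter.1 hk
                exact Finset.mem_range.2 hk2
            _ = f u := Finset.card_range _
  -- Step D: geometric sum computation
  have hdk_le : ∀ k ∈ Finset.range p, d ^ k ≤ m + 1 := by
    intro k hk
    rw [Finset.mem_range] at hk
    have hppos : 0 < p := by omega
    have hm1 : 1 < m + 1 := by
      by_contra hcon
      have : m = 0 := by omega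
      rw [hp, this] at hppos
      simp [Nat.clog_one_right] at hppos
    have h1 : d ^ k ≤ d ^ (p - 1) := Nat.pow_le_pow_right (by omega) (by omega)
    have h2 : d ^ (p - 1) < m + 1 := Nat.pow_pred_clog_lt_self (by omega) hm1
    omega
  have hsum : ∑ k ∈ Finset.range p, (m + 1 - d ^ k) + ∑ k ∈ Finset.range p, d ^ k
      = p * (m + 1) := by
    rw [← Finset.sum_add_distrib]
    rw [Finset.sum_congr rfl (fun k hk => Nat.sub_add_cancel (hdk_le k hk))]
    simp [Finset.sum_const, mul_comm]
  have hgeom : ∑ k ∈ Finset.range p, d ^ k = (d ^ p - 1) / (d - 1) :=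
    Nat.geomSum_eq hd p
  have hchain : ∑ k ∈ Finset.range p, (m + 1 - d ^ k)
      ≤ ∑ u ∈ N, f u :=
    le_trans (Finset.sum_le_sum fun k _ => stepB k) stepC
  show p * (m + 1) - (d ^ p - 1) / (d - 1) ≤ ∑ u ∈ N, f u
  rw [← hsum, hgeom]
  omega

/-- Double-counting: the objective value equals the sum over vertices of the
sums of half-distances to neighbours. -/
lemma OV_eq_sum {V : Type*} [Fintype V] [DecidableEq V] (G : SimpleGraph V)
    [DecidableRel G.Adj] (d h : ℕ) (φ : V → ℕ) (hinj : Function.Injective φ) :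
    OV G d h φ = ∑ v : V, ∑ u ∈ G.neighborFinset v, hdist d h (φ v) (φ u) := by
  classical
  set P : Finset (V × V) := Finset.univ.filter (fun p : V × V => G.Adj p.1 p.2) with hP
  have maps : ∀ p ∈ P, Sym2.mk p.1 p.2 ∈ G.edgeFinset := by
    rintro ⟨a, b⟩ hp
    rw [hP, Finset.mem_filter] at hp
    rw [SimpleGraph.mem_edgeFinset]
    exact hp.2
  have key1 : ∑ p ∈ P, hdist d h (φ p.1) (φ p.2)
      = ∑ v : V, ∑ u ∈ G.neighborFinset v, hdist d h (φ v) (φ u) := by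
    rw [hP, Finset.sum_filter, ← Finset.univ_product_univ, Finset.sum_product]
    refine Finset.sum_congr rfl fun v _ => ?_
    rw [SimpleGraph.neighborFinset_eq_filter, Finset.sum_filter]
  have key2 : ∑ e ∈ G.edgeFinset, ∑ p ∈ P.filter (fun p => Sym2.mk p.1 p.2 = e),
      hdist d h (φ p.1) (φ p.2) = ∑ p ∈ P, hdist d h (φ p.1) (φ p.2) :=
    Finset.sum_fiberwise_of_maps_to maps _
  rw [← key1, ← key2]
  unfold OV
  refine Finset.sum_congr rfl fun e he => ?_
  induction e using Sym2.ind with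
  | _ a b =>
    have hab : G.Adj a b := by
      rwa [SimpleGraph.mem_edgeFinset, SimpleGraph.mem_edgeSet] at he
    have hne : a ≠ b := hab.ne
    have hφne : φ a ≠ φ b := fun e => hne (hinj e)
    have hfiber : P.filter (fun p => Sym2.mk p.1 p.2 = s(a, b))
        = ({(a, b), (b, a)} : Finset (V × V)) := by
      ext ⟨x, y⟩
      simp only [hP, Finset.mem_filter, Finset.mem_univ, true_and, Finset.mem_insert,
        Finset.mem_singleton, Prod.mk.injEq, Sym2.eq_iff]
      constructor
      · rintro ⟨-, (⟨rfl, rfl⟩ | ⟨rfl, rfl⟩)⟩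
        · exact Or.inl ⟨rfl, rfl⟩
        · exact Or.inr ⟨rfl, rfl⟩
      · rintro (⟨rfl, rfl⟩ | ⟨rfl, rfl⟩)
        · exact ⟨hab, Or.inl ⟨rfl, rfl⟩⟩
        · exact ⟨hab.symm, Or.inr ⟨rfl, rfl⟩⟩
    have hpair : ((a, b) : V × V) ≠ (b, a) :=
      fun hcon => hne (congrArg Prod.fst hcon)
    rw [Sym2.lift_mk, hfiber, Finset.sum_pair hpair]
    show leafDist d h (φ a) (φ b)
      = hdist d h (φ a) (φ b) + hdist d h (φ b) (φ a)
    rw [leafDist_eq_hdist hφne, hdist_comm d h (φ b) (φ a)]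
    ring

/-- Theorem 3, the degree bound: for a finite simple graph `G` on
`n ≥ 2` vertices, `2 ≤ d ≤ n`, `h = ⌈log_d n⌉` (the least `h` with `n ≤ d^h`),
and `p(v) = ⌈log_d (deg v + 1)⌉ = Nat.clog d (deg v + 1)`, every injective
arrangement `φ : V(G) → {1,…,d^h}` satisfies
`OV(G,d,φ) ≥ Σ_v (p(v)(deg v + 1) − (d^{p(v)} − 1)/(d−1))`. -/
theorem degree_bound
    {V : Type*} [Fintype V] [DecidableEq V] (G : SimpleGraph V) [DecidableRel G.Adj]
    (n d h : ℕ) (hn : Fintype.card V = n) (hn2 : 2 ≤ n) (hd : 2 ≤ d) (hdn : d ≤ n)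
    (hh : IsLeast {k : ℕ | n ≤ d ^ k} h)
    (φ : V → ℕ) (hinj : Function.Injective φ)
    (hrange : ∀ v, 1 ≤ φ v ∧ φ v ≤ d ^ h) :
    ∑ v : V, (Nat.clog d (G.degree v + 1) * (G.degree v + 1)
        - (d ^ Nat.clog d (G.degree v + 1) - 1) / (d - 1))
      ≤ OV G d h φ := by
  have hh1 : 1 ≤ h := by
    by_contra hcon
    have h0 : h = 0 := by omega
    have := hh.1
    rw [Set.mem_setOf_eq, h0, pow_zero] at this
    omega
  rw [OV_eq_sum G d h φ hinj]
  exact Finset.sum_le_sum fun v _ => vertex_bound G hd hh1 φ hinj hrange v
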